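/- Spread law (blue): for a triangle A1A2A3 with nonzero blue quadrances Q1, Q2, Q3 (Qi opposite Ai) and blue spreads s1, s2, s3 at the vertices, s1/Q1 = s2/Q2 = s3/Q3. -/
import Mathlib


/-- Blue quadrance between two points. -/
def Qb {F : Type*} [Field F] (X Y : F × F) : F :=
  (Y.1 - X.1) ^ 2 + (Y.2 - X.2) ^ 2

/-- Blue spread between lines with direction vectors `u` and `v`. -/
def blueSpread {F : Type*} [Field F] (u v : F × F) : F :=
  (u.1 * v.2 - u.2 * v.1) ^ 2 / ((u.1 ^ 2 + u.2 ^ 2) * (v.1 ^ 2 + v.2 ^ 2))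

/-- Spread law (blue): `s1/Q1 = s2/Q2 = s3/Q3` for a triangle with
nonzero blue quadrances. -/
theorem blue_spread_law {F : Type*} [Field F] (A1 A2 A3 : F × F)
    (hQ1 : Qb A2 A3 ≠ 0) (hQ2 : Qb A1 A3 ≠ 0) (hQ3 : Qb A1 A2 ≠ 0) :
    blueSpread (A2.1 - A1.1, A2.2 - A1.2) (A3.1 - A1.1, A3.2 - A1.2) / Qb A2 A3
        = blueSpread (A1.1 - A2.1, A1.2 - A2.2) (A3.1 - A2.1, A3.2 - A2.2) / Qb A1 A3
      ∧ blueSpread (A1.1 - A2.1, A1.2 - A2.2) (A3.1 - A2.1, A3.2 - A2.2) / Qb A1 A3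
        = blueSpread (A1.1 - A3.1, A1.2 - A3.2) (A2.1 - A3.1, A2.2 - A3.2) / Qb A1 A2 := by
  simp only [Qb] at hQ1 hQ2 hQ3
  have h1 : ((A1.1 - A2.1) ^ 2 + (A1.2 - A2.2) ^ 2) ≠ 0 := by
    intro h; apply hQ3; linear_combination h
  have h2 : ((A1.1 - A3.1) ^ 2 + (A1.2 - A3.2) ^ 2) ≠ 0 := by
    intro h; apply hQ2; linear_combination h
  have h3 : ((A2.1 - A3.1) ^ 2 + (A2.2 - A3.2) ^ 2) ≠ 0 := by
    intro h; apply hQ1; linear_combination h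
  simp only [blueSpread, Qb]
  constructor <;> (field_simp; ring)
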